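/- Let f ∈ k[[t]] arise as follows: x = Σ_{n≥0} e_n t^n is a formal power series over a field k of characteristic ≠ 2 satisfying t^2 = f(x) for a polynomial f with f(e_0) = 0 and f'(e_0) ≠ 0. Then e_n = 0 for all odd n, i.e., x is an even power series in t. -/

import Mathlib

open PowerSeries Polynomial

/-- rescale as an algebra hom. -/
noncomputable def rescaleAlg {k : Type*} [CommRing k] (a : k) :
    PowerSeries k →ₐ[k] PowerSeries k :=
  { PowerSeries.rescale a with
    commutes' := by
      intro r
      show PowerSeries.rescale a (PowerSeries.C r) = PowerSeries.C r
      ext n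
      rw [PowerSeries.coeff_rescale, PowerSeries.coeff_C]
      rcases eq_or_ne n 0 with h | h <;> simp [h, PowerSeries.coeff_C] }

noncomputable def ccAlg (k : Type*) [CommRing k] : PowerSeries k →ₐ[k] k :=
  { PowerSeries.constantCoeff (R := k) with
    commutes' := fun r => PowerSeries.constantCoeff_C r }

theorem stmt2 {k : Type*} [Field k] (hchar : ringChar k ≠ 2)
    (f : Polynomial k) (x : PowerSeries k)
    (h0 : f.eval (PowerSeries.constantCoeff x) = 0)
    (h1 : f.derivative.eval (PowerSeries.constantCoeff x) ≠ 0)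
    (heq : (PowerSeries.X : PowerSeries k) ^ 2 = Polynomial.aeval x f) :
    ∀ n, Odd n → PowerSeries.coeff n x = 0 := by
  set y : PowerSeries k := PowerSeries.rescale (-1) x with hy
  have hyx : y = (rescaleAlg (-1 : k)) x := rfl
  -- y also satisfies the equation
  have heqy : (PowerSeries.X : PowerSeries k) ^ 2 = Polynomial.aeval y f := by
    have h := congrArg (rescaleAlg (-1 : k)) heq
    rw [map_pow, ← Polynomial.aeval_algHom_apply] at h
    have hX : (rescaleAlg (-1 : k)) PowerSeries.X = -PowerSeries.X :=
      PowerSeries.rescale_neg_one_X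
    rw [hX, neg_pow, neg_one_sq, one_mul] at h
    rw [h, hyx]
  have hcc : PowerSeries.constantCoeff y = PowerSeries.constantCoeff x := by
    rw [hy, ← PowerSeries.coeff_zero_eq_constantCoeff_apply,
      ← PowerSeries.coeff_zero_eq_constantCoeff_apply, PowerSeries.coeff_rescale]
    simp
  -- Taylor expansion of f around y
  set F : Polynomial (PowerSeries k) := f.map (algebraMap k (PowerSeries k)) with hF
  have hFx : F.eval x = Polynomial.aeval x f := by rw [hF, Polynomial.eval_map]; rfl
  have hFy : F.eval y = Polynomial.aeval y f := by rw [hF, Polynomial.eval_map]; rfl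
  set q : Polynomial (PowerSeries k) := Polynomial.taylor y F with hq
  set d : PowerSeries k := x - y with hd
  have hqd : q.eval d = F.eval x := by
    rw [hq, hd, Polynomial.taylor_eval_sub]
  have hq0 : q.coeff 0 = Polynomial.aeval y f := by
    rw [hq, Polynomial.taylor_coeff_zero, hFy]
  have hq1 : q.divX.coeff 0 = Polynomial.aeval y f.derivative := by
    have h : q.divX.coeff 0 = q.coeff 1 := by simp [Polynomial.coeff_divX]
    rw [h, hq, Polynomial.taylor_coeff_one, hF, Polynomial.derivative_map,
      Polynomial.eval_map]
    rfl
  have hdec : q = (q.divX.divX * Polynomial.X + Polynomial.C (q.divX.coeff 0)) * Polynomial.X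
      + Polynomial.C (q.coeff 0) := by
    rw [Polynomial.divX_mul_X_add, Polynomial.divX_mul_X_add]
  set A : PowerSeries k := q.divX.divX.eval d with hA
  set c : PowerSeries k := q.divX.coeff 0 with hc
  have key : d * (A * d + c) = 0 := by
    have h2 := congrArg (Polynomial.eval d) hdec
    rw [hqd, hFx, ← heq] at h2
    simp only [Polynomial.eval_add, Polynomial.eval_mul, Polynomial.eval_X,
      Polynomial.eval_C] at h2
    rw [hq0, ← heqy] at h2
    linear_combination -h2
  -- d has zero constant coefficient, c has nonzero constant coefficient
  have hdcc : PowerSeries.constantCoeff d = 0 := by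
    rw [hd, map_sub, hcc, sub_self]
  have hccc : PowerSeries.constantCoeff c ≠ 0 := by
    rw [hq1]
    have h : PowerSeries.constantCoeff (Polynomial.aeval y f.derivative)
        = Polynomial.aeval ((ccAlg k) y) f.derivative :=
      (Polynomial.aeval_algHom_apply (ccAlg k) y f.derivative).symm
    have hccy : (ccAlg k) y = PowerSeries.constantCoeff x := hcc
    rw [h, hccy]
    simpa [Polynomial.coe_aeval_eq_eval] using h1
  -- A * d + c is a unit
  have hunit : IsUnit (A * d + c) := by
    rw [PowerSeries.isUnit_iff_constantCoeff]
    rw [map_add, map_mul, hdcc, mul_zero, zero_add]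
    exact hccc.isUnit
  have hd0 : d = 0 := by
    rcases mul_eq_zero.mp key with h | h
    · exact h
    · exact absurd h hunit.ne_zero
  have hxy : x = y := by rw [hd] at hd0; exact sub_eq_zero.mp hd0
  intro n hn
  have h := congrArg (PowerSeries.coeff n) hxy
  rw [hy, PowerSeries.coeff_rescale, hn.neg_one_pow, neg_one_mul] at h
  have h2 : (2 : k) * PowerSeries.coeff n x = 0 := by linear_combination h
  exact (mul_eq_zero.mp h2).resolve_left (Ring.two_ne_zero hchar)
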